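/- (Lemma 5.8, item 2.) Assume the pair (A, b) is controllable (span{b, Ab, …, A^{n−1}b} = ℝⁿ) and A is invertible. Then for every α ∈ [0, T], the topological interior of R_α satisfies int R_α = {ξ ∈ R(T) : V₁(ξ) < α}, where V₁(ξ) = inf{‖u‖₁ : u ∈ U(ξ)}. -/

import Mathlib

open MeasureTheory

noncomputable section

/-- A control: a measurable function with `|u t| ≤ 1` a.e. on `[0, T]`. -/
def IsControl (T : ℝ) (u : ℝ → ℝ) : Prop :=
  Measurable u ∧ ∀ᵐ t ∂(volume.restrict (Set.Icc (0:ℝ) T)), |u t| ≤ 1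

/-- `∫₀ᵀ e^{−As} b u(s) ds`, the endpoint map of the system `dx/dt = Ax + bu`. -/
def steer (n : ℕ) (A : Matrix (Fin n) (Fin n) ℝ) (b : Fin n → ℝ) (T : ℝ) (u : ℝ → ℝ) :
    Fin n → ℝ :=
  ∫ s in Set.Icc (0:ℝ) T, u s • (NormedSpace.exp (-(s • A))).mulVec b

/-- `L¹` norm of a control on `[0, T]`. -/
def L1norm (T : ℝ) (u : ℝ → ℝ) : ℝ := ∫ t in Set.Icc (0:ℝ) T, |u t|

/-- The support of `u`: closure of `{t ∈ [0,T] : u t ≠ 0}`. -/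
def sparseSupp (T : ℝ) (u : ℝ → ℝ) : Set ℝ :=
  closure {t ∈ Set.Icc (0:ℝ) T | u t ≠ 0}

/-- `L⁰` "norm": Lebesgue measure of the support. -/
def L0norm (T : ℝ) (u : ℝ → ℝ) : ℝ := (volume (sparseSupp T u)).toReal

/-- Admissible controls for initial state `ξ`: controls steering `ξ` to `0` at time `T`. -/
def Adm (n : ℕ) (A : Matrix (Fin n) (Fin n) ℝ) (b : Fin n → ℝ) (T : ℝ) (ξ : Fin n → ℝ) :
    Set (ℝ → ℝ) :=
  {u | IsControl T u ∧ ξ = -(steer n A b T u)}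

/-- The reachable set `R(T)`. -/
def ReachSet (n : ℕ) (A : Matrix (Fin n) (Fin n) ℝ) (b : Fin n → ℝ) (T : ℝ) :
    Set (Fin n → ℝ) :=
  {x | ∃ u, IsControl T u ∧ x = steer n A b T u}

/-- The set `R_α`. -/
def Rset (n : ℕ) (A : Matrix (Fin n) (Fin n) ℝ) (b : Fin n → ℝ) (T α : ℝ) :
    Set (Fin n → ℝ) :=
  {x | ∃ u, IsControl T u ∧ L1norm T u ≤ α ∧ x = steer n A b T u}

/-- Value function of the `L¹`-optimal control problem. -/
def V1 (n : ℕ) (A : Matrix (Fin n) (Fin n) ℝ) (b : Fin n → ℝ) (T : ℝ) (ξ : Fin n → ℝ) : ℝ :=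
  sInf (L1norm T '' Adm n A b T ξ)

/-- Value function of the sparse (`L⁰`) optimal control problem. -/
def V0 (n : ℕ) (A : Matrix (Fin n) (Fin n) ℝ) (b : Fin n → ℝ) (T : ℝ) (ξ : Fin n → ℝ) : ℝ :=
  sInf (L0norm T '' Adm n A b T ξ)

/-- Controllability of the pair `(A, b)`: `span {b, Ab, …, A^{n−1} b} = ℝⁿ`. -/
def Controllable (n : ℕ) (A : Matrix (Fin n) (Fin n) ℝ) (b : Fin n → ℝ) : Prop :=
  Submodule.span ℝ (Set.range fun i : Fin n => (A ^ (i : ℕ)).mulVec b) = ⊤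


section AuxDev

open NormedSpace Set Matrix

attribute [local instance] Matrix.linftyOpSemiNormedRing Matrix.linftyOpNormedRing
  Matrix.linftyOpNormedAlgebra

variable {n : ℕ} (A : Matrix (Fin n) (Fin n) ℝ) (b : Fin n → ℝ)

/-- The integrand of the endpoint map. -/
def fm (s : ℝ) : Fin n → ℝ := (exp (-(s • A))).mulVec b

lemma fm_eq (s : ℝ) : fm A b s = (exp (s • (-A))).mulVec b := by
  rw [fm, smul_neg]

/-- `M ↦ c ⬝ᵥ M.mulVec v` as a continuous linear map. -/
def dotMulVecL (c v : Fin n → ℝ) : Matrix (Fin n) (Fin n) ℝ →L[ℝ] ℝ :=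
  LinearMap.toContinuousLinearMap
    { toFun := fun M => c ⬝ᵥ M.mulVec v
      map_add' := fun M N => by simp [Matrix.add_mulVec, dotProduct_add]
      map_smul' := fun a M => by simp [Matrix.smul_mulVec, dotProduct_smul] }

lemma dotMulVecL_apply (c v : Fin n → ℝ) (M : Matrix (Fin n) (Fin n) ℝ) :
    dotMulVecL c v M = c ⬝ᵥ M.mulVec v := rfl

/-- `M ↦ M.mulVec v` as a continuous linear map. -/
def mulVecL (v : Fin n → ℝ) : Matrix (Fin n) (Fin n) ℝ →L[ℝ] (Fin n → ℝ) :=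
  LinearMap.toContinuousLinearMap
    { toFun := fun M => M.mulVec v
      map_add' := fun M N => Matrix.add_mulVec M N v
      map_smul' := fun a M => Matrix.smul_mulVec a M v }

lemma continuous_fm : Continuous (fm A b) := by
  have heq : fm A b = fun s => mulVecL b (exp (s • (-A))) := funext fun s => fm_eq A b s
  rw [heq]
  exact (mulVecL b).continuous.comp (exp_continuous.comp (continuous_id.smul continuous_const))

lemma continuous_dot_fm (c : Fin n → ℝ) : Continuous fun s => c ⬝ᵥ fm A b s := by
  have heq : (fun s => c ⬝ᵥ fm A b s) = fun s => dotMulVecL c b (exp (s • (-A))) :=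
    funext fun s => by rw [fm_eq]; rfl
  rw [heq]
  exact (dotMulVecL c b).continuous.comp (exp_continuous.comp (continuous_id.smul continuous_const))

lemma analyticAt_dot_fm (c : Fin n → ℝ) (z : ℝ) :
    AnalyticAt ℝ (fun s : ℝ => c ⬝ᵥ fm A b s) z := by
  have h1 : AnalyticAt ℝ (fun s : ℝ => s • (-A)) z := by
    have h := ((ContinuousLinearMap.id ℝ ℝ).smulRight (-A)).analyticAt z
    have he : (fun s : ℝ => s • (-A)) = ⇑((ContinuousLinearMap.id ℝ ℝ).smulRight (-A)) := by
      funext s; simp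
    rw [he]
    exact h
  have h2 : AnalyticAt ℝ (exp) (z • (-A)) := exp_analytic _
  have h3 : AnalyticAt ℝ (dotMulVecL c b) (exp (z • (-A))) := (dotMulVecL c b).analyticAt _
  have h4 := AnalyticAt.comp (g := ⇑(dotMulVecL c b)) (f := (exp) ∘ fun s : ℝ => s • (-A)) h3
    (AnalyticAt.comp (g := exp) (f := fun s : ℝ => s • (-A)) h2 h1)
  have heq : (fun s : ℝ => c ⬝ᵥ fm A b s)
      = ⇑(dotMulVecL c b) ∘ ((exp) ∘ fun s : ℝ => s • (-A)) :=
    funext fun s => by simp only [Function.comp_apply, dotMulVecL_apply, fm_eq]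
  rw [heq]
  exact h4

lemma eq_zero_of_frequently_dot_fm (hctrb : Controllable n A b) {c : Fin n → ℝ} {z₀ : ℝ}
    (hfreq : ∃ᶠ z in nhdsWithin z₀ {z₀}ᶜ, c ⬝ᵥ fm A b z = 0) : c = 0 := by
  have hg : Set.EqOn (fun s : ℝ => c ⬝ᵥ fm A b s) 0 Set.univ :=
    AnalyticOnNhd.eqOn_zero_of_preconnected_of_frequently_eq_zero
      (fun z _ => analyticAt_dot_fm A b c z) isPreconnected_univ (Set.mem_univ z₀) hfreq
  have key : ∀ (k : ℕ) (s : ℝ), c ⬝ᵥ (exp (s • (-A))).mulVec ((A ^ k).mulVec b) = 0 := by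
    intro k
    induction k with
    | zero =>
      intro s
      have h := hg (Set.mem_univ s)
      simpa [fm_eq, Matrix.one_mulVec] using h
    | succ k ih =>
      intro s
      have hd : HasDerivAt (fun t : ℝ => (dotMulVecL c ((A ^ k).mulVec b)) (exp (t • (-A))))
          ((dotMulVecL c ((A ^ k).mulVec b)) (exp (s • (-A)) * (-A))) s :=
        (dotMulVecL c ((A ^ k).mulVec b)).hasFDerivAt.comp_hasDerivAt s
          (hasDerivAt_exp_smul_const (-A) s)
      have h0 : (fun t : ℝ => (dotMulVecL c ((A ^ k).mulVec b)) (exp (t • (-A))))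
          = fun _ => (0:ℝ) := funext fun t => by simpa [dotMulVecL_apply] using ih t
      rw [h0] at hd
      have h1 : (dotMulVecL c ((A ^ k).mulVec b)) (exp (s • (-A)) * (-A)) = 0 :=
        hd.unique (hasDerivAt_const s 0)
      have h2 : (exp (s • (-A)) * (-A)).mulVec ((A ^ k).mulVec b)
          = -((exp (s • (-A))).mulVec ((A ^ (k+1)).mulVec b)) := by
        rw [← Matrix.mulVec_mulVec ((A ^ k).mulVec b) (exp (s • (-A))) (-A),
          Matrix.neg_mulVec, Matrix.mulVec_neg, Matrix.mulVec_mulVec b A (A ^ k), ← pow_succ']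
      rw [dotMulVecL_apply, h2, dotProduct_neg, neg_eq_zero] at h1
      exact h1
  have hzero : ∀ k : ℕ, c ⬝ᵥ (A ^ k).mulVec b = 0 := by
    intro k
    have h := key k 0
    simpa [zero_smul, exp_zero, Matrix.one_mulVec] using h
  refine dotProduct_self_eq_zero.mp ?_
  have hall : ∀ x ∈ Submodule.span ℝ (Set.range fun i : Fin n => (A ^ (i:ℕ)).mulVec b),
      c ⬝ᵥ x = 0 := by
    intro x hx
    induction hx using Submodule.span_induction with
    | mem x hx => obtain ⟨i, rfl⟩ := hx; exact hzero i
    | zero => exact dotProduct_zero c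
    | add x y _ _ hx hy => rw [dotProduct_add, hx, hy, add_zero]
    | smul a x _ hx => rw [dotProduct_smul, hx, smul_zero]
  exact hall c (by rw [hctrb]; exact Submodule.mem_top)

variable (T : ℝ)

lemma integrableOn_dot_smul_fm (c : Fin n → ℝ) {E : Set ℝ} (hE : E ⊆ Set.Icc 0 T) :
    IntegrableOn (fun s => (c ⬝ᵥ fm A b s) • fm A b s) E volume :=
  (((continuous_dot_fm A b c).smul (continuous_fm A b)).integrableOn_Icc).mono_set hE

lemma integrableOn_sq_dot_fm (c : Fin n → ℝ) {E : Set ℝ} (hE : E ⊆ Set.Icc 0 T) :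
    IntegrableOn (fun s => (c ⬝ᵥ fm A b s) ^ 2) E volume :=
  (((continuous_dot_fm A b c).pow 2).integrableOn_Icc).mono_set hE

/-- The (restricted) controllability Gramian applied to a vector. -/
def gram (E : Set ℝ) (c : Fin n → ℝ) : Fin n → ℝ := ∫ s in E, (c ⬝ᵥ fm A b s) • fm A b s

lemma gram_add {E : Set ℝ} (hE : E ⊆ Set.Icc 0 T) (c d : Fin n → ℝ) :
    gram A b E (c + d) = gram A b E c + gram A b E d := by
  rw [_root_.gram, _root_.gram, _root_.gram,
    ← integral_add (integrableOn_dot_smul_fm A b T c hE) (integrableOn_dot_smul_fm A b T d hE)]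
  congr 1
  funext s
  rw [add_dotProduct, add_smul]

lemma gram_smul {E : Set ℝ} (hE : E ⊆ Set.Icc 0 T) (a : ℝ) (c : Fin n → ℝ) :
    gram A b E (a • c) = a • gram A b E c := by
  rw [_root_.gram, _root_.gram, ← integral_smul]
  congr 1
  funext s
  rw [smul_dotProduct, smul_eq_mul, ← smul_smul]

/-- `x ↦ c ⬝ᵥ x` as a continuous linear map. -/
def dotL (c : Fin n → ℝ) : (Fin n → ℝ) →L[ℝ] ℝ :=
  LinearMap.toContinuousLinearMap
    { toFun := fun x => c ⬝ᵥ x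
      map_add' := fun x y => dotProduct_add c x y
      map_smul' := fun a x => by simp [dotProduct_smul] }

lemma dot_gram {E : Set ℝ} (hE : E ⊆ Set.Icc 0 T) (c : Fin n → ℝ) :
    c ⬝ᵥ gram A b E c = ∫ s in E, (c ⬝ᵥ fm A b s) ^ 2 := by
  have h := (dotL c).integral_comp_comm (integrableOn_dot_smul_fm A b T c hE)
  calc c ⬝ᵥ gram A b E c = dotL c (gram A b E c) := rfl
  _ = ∫ s in E, dotL c ((c ⬝ᵥ fm A b s) • fm A b s) := h.symm
  _ = ∫ s in E, (c ⬝ᵥ fm A b s) ^ 2 := by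
      refine integral_congr_ae (Filter.Eventually.of_forall fun s => ?_)
      show c ⬝ᵥ ((c ⬝ᵥ fm A b s) • fm A b s) = (c ⬝ᵥ fm A b s) ^ 2
      rw [dotProduct_smul, smul_eq_mul, sq]

lemma gram_pos (hctrb : Controllable n A b) {E : Set ℝ} (hEm : MeasurableSet E)
    (hEIcc : E ⊆ Set.Icc 0 T) (hEvol : volume E ≠ 0) {c : Fin n → ℝ} (hc : c ≠ 0) :
    0 < ∫ s in E, (c ⬝ᵥ fm A b s) ^ 2 := by
  rw [setIntegral_pos_iff_support_of_nonneg_ae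
    (Filter.Eventually.of_forall fun s => sq_nonneg _) (integrableOn_sq_dot_fm A b T c hEIcc)]
  have hsupp : Function.support (fun s => (c ⬝ᵥ fm A b s) ^ 2) = {s | c ⬝ᵥ fm A b s ≠ 0} := by
    ext s
    simp [Function.mem_support, pow_eq_zero_iff]
  rw [hsupp]
  by_contra hcon
  have h9 : volume ({s | c ⬝ᵥ fm A b s ≠ 0} ∩ E) = 0 := le_zero_iff.1 (not_lt.1 hcon)
  set Z : Set ℝ := {s | c ⬝ᵥ fm A b s = 0} with hZ
  have hdecomp : E ⊆ ({s | c ⬝ᵥ fm A b s ≠ 0} ∩ E) ∪ (Z ∩ E) := by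
    intro s hs
    by_cases h : c ⬝ᵥ fm A b s = 0
    · exact Or.inr ⟨h, hs⟩
    · exact Or.inl ⟨h, hs⟩
  have hZE : volume (Z ∩ E) ≠ 0 := by
    intro h0
    have h10 : volume E ≤ volume ({s | c ⬝ᵥ fm A b s ≠ 0} ∩ E) + volume (Z ∩ E) :=
      (measure_mono hdecomp).trans (measure_union_le _ _)
    rw [h9, h0, add_zero] at h10
    exact hEvol (le_zero_iff.1 h10)
  have hZEinf : (Z ∩ E).Infinite := by
    intro hfin
    exact hZE (hfin.measure_zero volume)
  obtain ⟨z₀, _, hz₀acc⟩ :=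
    hZEinf.exists_accPt_of_subset_isCompact isCompact_Icc (fun s hs => hEIcc hs.2)
  have hfreq : ∃ᶠ z in nhdsWithin z₀ {z₀}ᶜ, c ⬝ᵥ fm A b z = 0 := by
    have h10 : ∃ᶠ z in nhdsWithin z₀ {z₀}ᶜ, z ∈ Z ∩ E := Filter.frequently_mem_iff_neBot.2 hz₀acc
    exact h10.mono fun z hz => hz.1
  exact hc (eq_zero_of_frequently_dot_fm A b hctrb hfreq)

end AuxDev

section Helpers

open Set Matrix

variable {n : ℕ} (A : Matrix (Fin n) (Fin n) ℝ) (b : Fin n → ℝ) (T : ℝ)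

lemma steer_fm (u : ℝ → ℝ) :
    steer n A b T u = ∫ s in Set.Icc (0:ℝ) T, u s • fm A b s := rfl

lemma L1norm_nonneg (u : ℝ → ℝ) : 0 ≤ L1norm T u :=
  integral_nonneg fun t => abs_nonneg _

lemma steer_neg (u : ℝ → ℝ) : steer n A b T (fun s => -(u s)) = -(steer n A b T u) := by
  rw [steer_fm, steer_fm]
  simp_rw [neg_smul]
  exact integral_neg _

lemma bound_fm : ∃ M : ℝ, 0 ≤ M ∧ ∀ s ∈ Set.Icc (0:ℝ) T, ‖fm A b s‖ ≤ M := by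
  obtain ⟨M0, hM0⟩ := (isCompact_Icc (a := (0:ℝ)) (b := T)).exists_bound_of_continuousOn
    (continuous_fm A b).continuousOn
  exact ⟨max M0 0, le_max_right _ _, fun s hs => le_trans (hM0 s hs) (le_max_left _ _)⟩

lemma abs_le_one_integrable {u : ℝ → ℝ} (hu : IsControl T u) :
    IntegrableOn (fun t => |u t|) (Set.Icc 0 T) volume := by
  refine Integrable.mono' (g := fun _ => (1:ℝ)) (integrableOn_const measure_Icc_lt_top.ne)
    (hu.1.abs.aestronglyMeasurable) ?_
  filter_upwards [hu.2] with t ht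
  rwa [Real.norm_eq_abs, abs_abs]

lemma control_integrand_integrable {u : ℝ → ℝ} (hu : Measurable u)
    (C : ℝ) (hbound : ∀ᵐ t ∂(volume.restrict (Set.Icc (0:ℝ) T)), |u t| ≤ C) :
    IntegrableOn (fun s => u s • fm A b s) (Set.Icc 0 T) volume := by
  obtain ⟨M, hM0, hM⟩ := bound_fm A b T
  refine Integrable.mono' (g := fun _ => C * M)
    (integrableOn_const measure_Icc_lt_top.ne)
    ((hu.smul (continuous_fm A b).measurable).aestronglyMeasurable) ?_
  filter_upwards [hbound, ae_restrict_mem measurableSet_Icc] with t h1 h2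
  rw [norm_smul, Real.norm_eq_abs]
  exact mul_le_mul h1 (hM t h2) (norm_nonneg _) (le_trans (abs_nonneg _) h1)

lemma abs_dot_le (c x : Fin n → ℝ) : |c ⬝ᵥ x| ≤ n * ‖c‖ * ‖x‖ := by
  have h1 : |c ⬝ᵥ x| ≤ ∑ i : Fin n, |c i * x i| := Finset.abs_sum_le_sum_abs _ _
  have h2 : ∀ i : Fin n, |c i * x i| ≤ ‖c‖ * ‖x‖ := fun i => by
    rw [abs_mul]
    exact mul_le_mul (by simpa using norm_le_pi_norm c i) (by simpa using norm_le_pi_norm x i)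
      (abs_nonneg _) (norm_nonneg _)
  calc |c ⬝ᵥ x| ≤ ∑ i : Fin n, |c i * x i| := h1
  _ ≤ ∑ _i : Fin n, ‖c‖ * ‖x‖ := Finset.sum_le_sum fun i _ => h2 i
  _ = n * ‖c‖ * ‖x‖ := by
      rw [Finset.sum_const, Finset.card_univ, Fintype.card_fin, nsmul_eq_mul, mul_assoc]

lemma Rset_zero_sub : Rset n A b T 0 ⊆ {0} := by
  rintro x ⟨u, hu, hL1, rfl⟩
  have h0 : L1norm T u = 0 := le_antisymm hL1 (L1norm_nonneg T u)
  have hint := abs_le_one_integrable T hu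
  have hae : (fun t => |u t|) =ᵐ[volume.restrict (Set.Icc (0:ℝ) T)] 0 :=
    (integral_eq_zero_iff_of_nonneg_ae
      (Filter.Eventually.of_forall fun t => abs_nonneg _) hint).1 h0
  have hz : (fun s => u s • fm A b s) =ᵐ[volume.restrict (Set.Icc (0:ℝ) T)] 0 := by
    filter_upwards [hae] with t ht
    have ht' : |u t| = 0 := ht
    have : u t = 0 := abs_eq_zero.1 ht'
    simp [this]
  rw [Set.mem_singleton_iff, steer_fm, integral_eq_zero_of_ae hz]

end Helpers


set_option maxHeartbeats 1000000

open Matrix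

/-- Lemma 5.8, item 2: under controllability and invertibility of `A`,
`int R_α = {ξ ∈ R(T) : V₁(ξ) < α}` for every `α ∈ [0,T]`. -/
theorem interior_Rset_eq_strict_sublevel (T : ℝ) (hT : 0 < T) (n : ℕ) (hn : 1 ≤ n)
    (A : Matrix (Fin n) (Fin n) ℝ) (b : Fin n → ℝ)
    (hctrb : Controllable n A b) (hA : IsUnit A) :
    ∀ α ∈ Set.Icc (0:ℝ) T,
      interior (Rset n A b T α) = {ξ ∈ ReachSet n A b T | V1 n A b T ξ < α} := by
  intro α hα
  obtain ⟨hα0, hαT⟩ := hα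
  have hIccT : (volume (Set.Icc (0:ℝ) T)).toReal = T := by
    rw [Real.volume_Icc, ENNReal.toReal_ofReal (by linarith), sub_zero]
  apply subset_antisymm
  · -- interior R_α ⊆ {ξ ∈ R(T) : V₁ ξ < α}
    intro ξ hξ
    rw [mem_interior_iff_mem_nhds, Metric.mem_nhds_iff] at hξ
    obtain ⟨δ, hδ, hball⟩ := hξ
    rcases eq_or_lt_of_le hα0 with h0 | hαpos
    · exfalso
      rw [← h0] at hball
      set i0 : Fin n := ⟨0, hn⟩ with hi0
      have h1 : ξ ∈ ({0} : Set (Fin n → ℝ)) :=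
        Rset_zero_sub A b T (hball (Metric.mem_ball_self hδ))
      have h2 : ξ + (Pi.single i0 (δ/2) : Fin n → ℝ) ∈ ({0} : Set (Fin n → ℝ)) := by
        refine Rset_zero_sub A b T (hball ?_)
        rw [Metric.mem_ball, dist_eq_norm, add_sub_cancel_left]
        have hns : ‖(Pi.single i0 (δ/2) : Fin n → ℝ)‖ ≤ δ/2 := by
          refine (pi_norm_le_iff_of_nonneg (by linarith)).2 fun i => ?_
          rcases eq_or_ne i i0 with rfl | hne
          · rw [Pi.single_eq_same, Real.norm_eq_abs, abs_of_nonneg (by linarith)]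
          · rw [Pi.single_eq_of_ne hne]
            simpa using (by linarith : (0:ℝ) ≤ δ/2)
        linarith
      rw [Set.mem_singleton_iff] at h1 h2
      rw [h1, zero_add] at h2
      have h3 := congrFun h2 i0
      rw [Pi.single_eq_same] at h3
      simp only [Pi.zero_apply] at h3
      linarith
    · by_cases hξ0 : ξ = 0
      · subst hξ0
        have hctl : IsControl T (fun _ => (0:ℝ)) :=
          ⟨measurable_const, Filter.Eventually.of_forall fun t => by norm_num⟩
        have hst : steer n A b T (fun _ => (0:ℝ)) = 0 := by
          rw [steer_fm]; simp
        have hAdm : (fun _ => (0:ℝ)) ∈ Adm n A b T 0 := ⟨hctl, by rw [hst, neg_zero]⟩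
        have hbdd : BddBelow (L1norm T '' Adm n A b T 0) :=
          ⟨0, by rintro r ⟨u, _, rfl⟩; exact L1norm_nonneg T u⟩
        refine ⟨⟨fun _ => 0, hctl, hst.symm⟩, ?_⟩
        have hle : V1 n A b T 0 ≤ L1norm T (fun _ => (0:ℝ)) :=
          csInf_le hbdd ⟨fun _ => 0, hAdm, rfl⟩
        have hL0 : L1norm T (fun _ => (0:ℝ)) = 0 := by simp [L1norm]
        rw [hL0] at hle
        exact lt_of_le_of_lt hle hαpos
      · have hξpos : 0 < ‖ξ‖ := norm_pos_iff.2 hξ0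
        set ε := δ / (2 * ‖ξ‖) with hepsdef
        have hε : 0 < ε := div_pos hδ (by positivity)
        have hmem : (1 + ε) • ξ ∈ Rset n A b T α := by
          apply hball
          rw [Metric.mem_ball, dist_eq_norm]
          have he : (1 + ε) • ξ - ξ = ε • ξ := by rw [add_smul, one_smul]; abel
          rw [he, norm_smul, Real.norm_eq_abs, abs_of_pos hε, hepsdef, div_mul_eq_mul_div,
            div_lt_iff₀ (by positivity)]
          nlinarith
        obtain ⟨u, hu, hL1u, hsteeru⟩ := hmem
        set lam := (1 + ε)⁻¹ with hlamdef
        have hlam0 : 0 < lam := by rw [hlamdef]; positivity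
        have hlam1 : lam < 1 := by
          rw [hlamdef]
          rw [inv_lt_one_iff₀]
          right; linarith
        set u' := fun s => lam * u s with hu'def
        have hu' : IsControl T u' := by
          refine ⟨measurable_const.mul hu.1, ?_⟩
          filter_upwards [hu.2] with t ht
          rw [hu'def]
          simp only []
          rw [abs_mul]
          calc |lam| * |u t| ≤ 1 * 1 := by
                refine mul_le_mul ?_ ht (abs_nonneg _) zero_le_one
                rw [abs_of_pos hlam0]; linarith
          _ = 1 := by norm_num
        have hsteer' : steer n A b T u' = ξ := by
          rw [steer_fm]
          have h1 : (fun s => u' s • fm A b s) = fun s => lam • (u s • fm A b s) := by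
            funext s
            rw [hu'def]
            exact (smul_smul lam (u s) (fm A b s)).symm
          rw [h1, integral_smul, ← steer_fm, ← hsteeru, smul_smul, hlamdef,
            inv_mul_cancel₀ (by linarith : (1:ℝ) + ε ≠ 0), one_smul]
        have hL1' : L1norm T u' = lam * L1norm T u := by
          calc L1norm T u' = ∫ t in Set.Icc (0:ℝ) T, |lam| * |u t| := by
                rw [L1norm, hu'def]
                simp_rw [abs_mul]
          _ = |lam| * ∫ t in Set.Icc (0:ℝ) T, |u t| := integral_const_mul _ _
          _ = lam * L1norm T u := by rw [abs_of_pos hlam0]; rfl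
        refine ⟨⟨u', hu', hsteer'.symm⟩, ?_⟩
        set u'' := fun s => -(u' s) with hu''def
        have hu''ctl : IsControl T u'' := by
          refine ⟨hu'.1.neg, ?_⟩
          filter_upwards [hu'.2] with t ht
          rw [hu''def]
          simpa [abs_neg] using ht
        have hAdm : u'' ∈ Adm n A b T ξ := by
          refine ⟨hu''ctl, ?_⟩
          rw [hu''def, steer_neg, hsteer', neg_neg]
        have hbdd : BddBelow (L1norm T '' Adm n A b T ξ) :=
          ⟨0, by rintro r ⟨v, _, rfl⟩; exact L1norm_nonneg T v⟩
        have hle : V1 n A b T ξ ≤ L1norm T u'' := csInf_le hbdd ⟨u'', hAdm, rfl⟩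
        have hL1'' : L1norm T u'' = L1norm T u' := by
          rw [hu''def, L1norm, L1norm]
          simp_rw [abs_neg]
        calc V1 n A b T ξ ≤ L1norm T u'' := hle
        _ = lam * L1norm T u := by rw [hL1'', hL1']
        _ ≤ lam * α := mul_le_mul_of_nonneg_left hL1u hlam0.le
        _ < α := by nlinarith
  · -- {ξ ∈ R(T) : V₁ ξ < α} ⊆ interior R_α
    rintro ξ ⟨hreach, hV⟩
    obtain ⟨u0, hu0, hsx⟩ := hreach
    have hu0n : IsControl T (fun s => -(u0 s)) := by
      refine ⟨hu0.1.neg, ?_⟩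
      filter_upwards [hu0.2] with t ht
      simpa [abs_neg] using ht
    have hAdmNe : (L1norm T '' Adm n A b T ξ).Nonempty :=
      ⟨L1norm T (fun s => -(u0 s)),
        ⟨fun s => -(u0 s), ⟨hu0n, by rw [steer_neg, neg_neg]; exact hsx⟩, rfl⟩⟩
    obtain ⟨r0, ⟨w0, hw0Adm, rfl⟩, hr0lt⟩ := exists_lt_of_csInf_lt hAdmNe hV
    set w := fun s => -(w0 s) with hwdef
    have hw : IsControl T w := by
      refine ⟨hw0Adm.1.1.neg, ?_⟩
      filter_upwards [hw0Adm.1.2] with t ht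
      rw [hwdef]
      simpa [abs_neg] using ht
    have hsteerw : steer n A b T w = ξ := by
      rw [hwdef, steer_neg]
      exact hw0Adm.2.symm
    have hL1w : L1norm T w = L1norm T w0 := by
      rw [hwdef, L1norm, L1norm]
      simp_rw [abs_neg]
    set β := L1norm T w with hβdef
    have hβα : β < α := by rw [hL1w]; exact hr0lt
    have hβ0 : 0 ≤ β := L1norm_nonneg T w
    have hβT : β < T := lt_of_lt_of_le hβα hαT
    set c0 := (β / T + 1) / 2 with hc0def
    have hβTlt : β / T < 1 := (div_lt_one hT).2 hβT
    have hc0a : β / T < c0 := by rw [hc0def]; linarith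
    have hc0b : c0 < 1 := by rw [hc0def]; linarith
    have hc0pos : 0 < c0 := by
      have h := div_nonneg hβ0 hT.le
      rw [hc0def]; linarith
    set E := {t ∈ Set.Icc (0:ℝ) T | |w t| ≤ c0} with hEdef
    have hEeq : E = Set.Icc (0:ℝ) T ∩ {t | |w t| ≤ c0} := by
      rw [hEdef]; ext t; simp [Set.mem_sep_iff, Set.mem_inter_iff]
    have hEm : MeasurableSet E := by
      rw [hEeq]
      exact measurableSet_Icc.inter (measurableSet_le hw.1.abs measurable_const)
    have hEIcc : E ⊆ Set.Icc 0 T := fun t ht => ht.1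
    have hEvol : volume E ≠ 0 := by
      intro hE0
      set F := Set.Icc (0:ℝ) T \ E with hFdef
      have hFsub : F ⊆ Set.Icc 0 T := Set.diff_subset
      have hwint : IntegrableOn (fun t => |w t|) (Set.Icc 0 T) volume :=
        abs_le_one_integrable T hw
      have hFfin : volume F < ⊤ := lt_of_le_of_lt (measure_mono hFsub) measure_Icc_lt_top
      have h1 : ∫ t in F, c0 ≤ ∫ t in F, |w t| := by
        refine setIntegral_mono_on (integrableOn_const hFfin.ne)
          (hwint.mono_set hFsub) (measurableSet_Icc.diff hEm) ?_
        intro t ht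
        have hn2 : ¬ |w t| ≤ c0 := fun hc => ht.2 ⟨ht.1, hc⟩
        linarith [not_le.1 hn2]
      have h2 : ∫ t in F, |w t| ≤ ∫ t in Set.Icc (0:ℝ) T, |w t| :=
        setIntegral_mono_set hwint (Filter.Eventually.of_forall fun t => abs_nonneg _)
          (HasSubset.Subset.eventuallyLE hFsub)
      rw [setIntegral_const, smul_eq_mul] at h1
      have h3 : (volume F).toReal * c0 ≤ β := le_trans h1 h2
      have hcover : Set.Icc (0:ℝ) T ⊆ E ∪ F := by
        intro t ht
        by_cases h : t ∈ E
        · exact Or.inl h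
        · exact Or.inr ⟨ht, h⟩
      have h4 : volume (Set.Icc (0:ℝ) T) ≤ volume F := by
        have h5 : volume (Set.Icc (0:ℝ) T) ≤ volume E + volume F :=
          (measure_mono hcover).trans (measure_union_le E F)
        rwa [hE0, zero_add] at h5
      have h5 : T ≤ (volume F).toReal := by
        rw [← hIccT]
        exact ENNReal.toReal_mono hFfin.ne h4
      have h6 : β < c0 * T := by
        have := (div_lt_iff₀ hT).1 hc0a
        linarith
      nlinarith
    -- the Gramian construction
    let Φ : (Fin n → ℝ) →ₗ[ℝ] (Fin n → ℝ) :=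
      { toFun := gram A b E
        map_add' := gram_add A b T hEIcc
        map_smul' := fun a c => by
          simp only [RingHom.id_apply]
          exact gram_smul A b T hEIcc a c }
    have hΦgram : ∀ c, Φ c = gram A b E c := fun c => rfl
    have hΦinj : Function.Injective Φ := by
      refine LinearMap.ker_eq_bot.1 (LinearMap.ker_eq_bot'.2 fun c hc => ?_)
      by_contra hne
      have hpos := gram_pos A b T hctrb hEm hEIcc hEvol hne
      have hdz : c ⬝ᵥ gram A b E c = 0 := by rw [← hΦgram, hc, dotProduct_zero]
      rw [dot_gram A b T hEIcc c] at hdz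
      exact hpos.ne' hdz
    have hΦsurj : Function.Surjective Φ := LinearMap.injective_iff_surjective.1 hΦinj
    let e : (Fin n → ℝ) ≃ₗ[ℝ] (Fin n → ℝ) := LinearEquiv.ofBijective Φ ⟨hΦinj, hΦsurj⟩
    let S : (Fin n → ℝ) →L[ℝ] (Fin n → ℝ) :=
      LinearMap.toContinuousLinearMap (e.symm : (Fin n → ℝ) →ₗ[ℝ] (Fin n → ℝ))
    set K := ‖S‖ with hKdef
    have hK0 : 0 ≤ K := norm_nonneg S
    obtain ⟨M, hM0, hM⟩ := bound_fm A b T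
    set C0 := (n : ℝ) * K * M + 1 with hC0def
    have hnKM : 0 ≤ (n : ℝ) * K * M :=
      mul_nonneg (mul_nonneg (Nat.cast_nonneg n) hK0) hM0
    have hC0 : 0 < C0 := by rw [hC0def]; linarith
    set r := min ((1 - c0) / C0) ((α - β) / (C0 * (T + 1))) with hrdef
    have hr : 0 < r := lt_min (div_pos (by linarith) hC0)
      (div_pos (by linarith) (mul_pos hC0 (by linarith)))
    refine mem_interior.2 ⟨Metric.ball ξ r, ?_, Metric.isOpen_ball, Metric.mem_ball_self hr⟩
    intro x hx
    set y := x - ξ with hydef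
    have hy : ‖y‖ < r := by rw [hydef, ← dist_eq_norm]; exact Metric.mem_ball.1 hx
    have hy0 : 0 ≤ ‖y‖ := norm_nonneg y
    set cy := e.symm y with hcydef
    have hcy : ‖cy‖ ≤ K * ‖y‖ := by
      have h7 : S y = cy := by rw [hcydef]; rfl
      rw [← h7, hKdef]
      exact S.le_opNorm y
    set g := fun s => cy ⬝ᵥ fm A b s with hgdef
    set v := E.indicator g with hvdef
    have hgb : ∀ s ∈ Set.Icc (0:ℝ) T, |g s| ≤ C0 * ‖y‖ := by
      intro s hs
      calc |g s| ≤ n * ‖cy‖ * ‖fm A b s‖ := abs_dot_le cy (fm A b s)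
      _ ≤ n * (K * ‖y‖) * ‖fm A b s‖ :=
          mul_le_mul_of_nonneg_right (mul_le_mul_of_nonneg_left hcy (Nat.cast_nonneg n))
            (norm_nonneg _)
      _ ≤ n * (K * ‖y‖) * M :=
          mul_le_mul_of_nonneg_left (hM s hs)
            (mul_nonneg (Nat.cast_nonneg n) (mul_nonneg hK0 hy0))
      _ = ((n:ℝ) * K * M) * ‖y‖ := by ring
      _ ≤ C0 * ‖y‖ := mul_le_mul_of_nonneg_right (by rw [hC0def]; linarith) hy0
    have hvb : ∀ s, |v s| ≤ C0 * ‖y‖ := by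
      intro s
      rw [hvdef]
      by_cases hsE : s ∈ E
      · rw [Set.indicator_of_mem hsE]; exact hgb s (hEIcc hsE)
      · rw [Set.indicator_of_notMem hsE]
        simpa using mul_nonneg hC0.le hy0
    have hr1 : C0 * ‖y‖ ≤ 1 - c0 := by
      have h12 : ‖y‖ ≤ (1 - c0) / C0 := le_trans hy.le (min_le_left _ _)
      have h13 := (le_div_iff₀ hC0).1 h12
      have h13' : C0 * ‖y‖ = ‖y‖ * C0 := mul_comm _ _
      linarith
    have hr2 : C0 * ‖y‖ * T ≤ α - β := by
      have h12 : ‖y‖ ≤ (α - β) / (C0 * (T + 1)) := le_trans hy.le (min_le_right _ _)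
      have h14 := (le_div_iff₀ (mul_pos hC0 (by linarith : (0:ℝ) < T + 1))).1 h12
      have h16 : C0 * ‖y‖ * T + C0 * ‖y‖ = ‖y‖ * (C0 * (T + 1)) := by ring
      have h17 : 0 ≤ C0 * ‖y‖ := mul_nonneg hC0.le hy0
      linarith
    have hvmeas : Measurable v := by
      rw [hvdef, hgdef]
      exact Measurable.indicator (continuous_dot_fm A b cy).measurable hEm
    set unew := fun s => w s + v s with hunewdef
    have hunew : IsControl T unew := by
      refine ⟨hw.1.add hvmeas, ?_⟩
      filter_upwards [hw.2] with t ht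
      show |w t + v t| ≤ 1
      by_cases htE : t ∈ E
      · have hwc : |w t| ≤ c0 := htE.2
        have hvc : |v t| ≤ C0 * ‖y‖ := hvb t
        calc |w t + v t| ≤ |w t| + |v t| := abs_add_le _ _
        _ ≤ 1 := by linarith
      · have hv0 : v t = 0 := by rw [hvdef]; exact Set.indicator_of_notMem htE g
        rw [hv0, add_zero]; exact ht
    have hwint : IntegrableOn (fun s => w s • fm A b s) (Set.Icc 0 T) volume :=
      control_integrand_integrable A b T hw.1 1 hw.2
    have hvint : IntegrableOn (fun s => v s • fm A b s) (Set.Icc 0 T) volume :=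
      control_integrand_integrable A b T hvmeas (C0 * ‖y‖)
        (Filter.Eventually.of_forall hvb)
    have hsteerv : (∫ s in Set.Icc (0:ℝ) T, v s • fm A b s) = y := by
      have h15 : (fun s => v s • fm A b s) = E.indicator (fun s => g s • fm A b s) := by
        funext s
        rw [hvdef]
        by_cases hsE : s ∈ E
        · rw [Set.indicator_of_mem hsE, Set.indicator_of_mem hsE]
        · rw [Set.indicator_of_notMem hsE, Set.indicator_of_notMem hsE, zero_smul]
      rw [h15, setIntegral_indicator hEm, Set.inter_eq_self_of_subset_right hEIcc]
      have h16 : (∫ s in E, g s • fm A b s) = gram A b E cy := by rw [hgdef]; rfl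
      rw [h16, ← hΦgram, hcydef]
      exact e.apply_symm_apply y
    have hsteern : steer n A b T unew = x := by
      rw [steer_fm]
      have h17 : (fun s => unew s • fm A b s)
          = fun s => w s • fm A b s + v s • fm A b s := by
        funext s; rw [hunewdef]; rw [add_smul]
      rw [h17, integral_add hwint hvint, ← steer_fm, hsteerw, hsteerv, hydef]
      abel
    have hvabs : IntegrableOn (fun t => |v t|) (Set.Icc 0 T) volume := by
      refine Integrable.mono' (g := fun _ => C0 * ‖y‖)
        (integrableOn_const measure_Icc_lt_top.ne)
        (hvmeas.abs.aestronglyMeasurable) ?_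
      exact Filter.Eventually.of_forall fun t => by
        rw [Real.norm_eq_abs, abs_abs]; exact hvb t
    have hwabs := abs_le_one_integrable T hw
    have hL1n : L1norm T unew ≤ α := by
      have hint : IntegrableOn (fun t => |w t| + |v t|) (Set.Icc 0 T) volume :=
        hwabs.add hvabs
      have h18 : L1norm T unew ≤ ∫ t in Set.Icc (0:ℝ) T, (|w t| + |v t|) := by
        refine setIntegral_mono_on ?_ hint measurableSet_Icc ?_
        · refine Integrable.mono hint ((hw.1.add hvmeas).abs.aestronglyMeasurable) ?_
          refine Filter.Eventually.of_forall fun t => ?_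
          rw [Real.norm_eq_abs, abs_abs, Real.norm_eq_abs,
            abs_of_nonneg (by positivity : (0:ℝ) ≤ |w t| + |v t|)]
          exact abs_add_le _ _
        · intro t _
          rw [hunewdef]
          exact abs_add_le _ _
      have h19 : ∫ t in Set.Icc (0:ℝ) T, (|w t| + |v t|)
          = β + ∫ t in Set.Icc (0:ℝ) T, |v t| := by
        rw [integral_add hwabs hvabs, hβdef, L1norm]
      have h20 : ∫ t in Set.Icc (0:ℝ) T, |v t| ≤ (C0 * ‖y‖) * T := by
        have h21 : ∫ t in Set.Icc (0:ℝ) T, |v t|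
            ≤ ∫ _t in Set.Icc (0:ℝ) T, (C0 * ‖y‖ : ℝ) :=
          setIntegral_mono_on hvabs (integrableOn_const measure_Icc_lt_top.ne)
            measurableSet_Icc (fun t _ => hvb t)
        rw [setIntegral_const, measureReal_def, hIccT, smul_eq_mul] at h21
        linarith [h21, mul_comm T (C0 * ‖y‖)]
      calc L1norm T unew ≤ β + ∫ t in Set.Icc (0:ℝ) T, |v t| := by rw [← h19]; exact h18
      _ ≤ β + (C0 * ‖y‖) * T := by linarith
      _ ≤ β + (α - β) := by linarith
      _ = α := by ring
    exact ⟨unew, hunew, hL1n, hsteern.symm⟩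


end
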